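/- There is an absolute constant C such that every tree T on n ≥ 2 vertices has an independent set S with the following properties: no vertex of T has two neighbors in S, and every connected component of the subgraph of T induced by V(T) \ S has radius at most C·log₂ n. -/

import Mathlib

open SimpleGraph

namespace Stmt13Aux

variable {V : Type} [DecidableEq V] {G : SimpleGraph V}

/-- `b` lies on a geodesic from `a` to `c`. -/
def Btw (G : SimpleGraph V) (a b c : V) : Prop :=
  G.dist a c = G.dist a b + G.dist b c

lemma dist_adj (h : G.Adj a b) : G.dist a b = 1 :=
  dist_eq_one_iff_adj.mpr h

lemma isPath_of_length_le (hc : G.Connected) :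
    ∀ {a b : V} (p : G.Walk a b), p.length ≤ G.dist a b → p.IsPath := by
  intro a b p
  induction p with
  | nil => intro _; simp
  | @cons u x w ha q ih =>
    intro hle
    have htri : G.dist u w ≤ G.dist u x + G.dist x w := hc.dist_triangle
    have hadj : G.dist u x = 1 := dist_adj ha
    have hql : q.length ≤ G.dist x w := by
      simp only [Walk.length_cons] at hle; omega
    have hq := ih hql
    refine hq.cons ?_
    intro hu
    have h1 : G.dist u w ≤ (q.dropUntil u hu).length := G.dist_le _
    have h2 : (q.dropUntil u hu).length ≤ q.length := Walk.length_dropUntil_le q hu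
    simp only [Walk.length_cons] at hle
    omega

lemma exists_geodesic (hc : G.Connected) (a b : V) :
    ∃ p : G.Walk a b, p.IsPath ∧ p.length = G.dist a b := by
  obtain ⟨w, hw⟩ := hc.exists_walk_length_eq_dist a b
  refine ⟨w.bypass, w.bypass_isPath, le_antisymm ?_ (G.dist_le _)⟩
  calc w.bypass.length ≤ w.length := w.length_bypass_le
  _ = G.dist a b := hw

lemma path_length_eq_dist (hG : G.IsTree) {a b : V} (p : G.Walk a b) (hp : p.IsPath) :
    p.length = G.dist a b := by
  obtain ⟨q, hq, hql⟩ := exists_geodesic hG.isConnected a b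
  have : (⟨p, hp⟩ : G.Path a b) = ⟨q, hq⟩ := hG.2.path_unique _ _
  rw [show p = q from congrArg Subtype.val this]
  exact hql

lemma dist_split (hG : G.IsTree) {a b x : V} (p : G.Walk a b) (hp : p.IsPath)
    (hx : x ∈ p.support) : G.dist a x + G.dist x b = G.dist a b := by
  have h1 := path_length_eq_dist hG _ (hp.takeUntil hx)
  have h2 := path_length_eq_dist hG _ (hp.dropUntil hx)
  have h3 := path_length_eq_dist hG p hp
  have h4 := congrArg Walk.length (p.take_spec hx)
  rw [Walk.length_append] at h4
  omega

/-- adjacent vertices have depths differing by one. -/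
lemma adj_depth (hG : G.IsTree) (r0 : V) {u v : V} (h : G.Adj u v) :
    G.dist r0 v = G.dist r0 u + 1 ∨ G.dist r0 u = G.dist r0 v + 1 := by
  obtain ⟨p, hp, hl⟩ := exists_geodesic hG.isConnected r0 v
  by_cases hu : u ∈ p.support
  · left
    have := dist_split hG p hp hu
    have := dist_adj h
    omega
  · right
    have hq : (p.concat h.symm).IsPath := by
      rw [Walk.isPath_def, Walk.support_concat]
      rw [Walk.isPath_def] at hp
      simp [List.nodup_append, hp, hu]
      exact fun a ha hau => hu (hau ▸ ha)
    have := path_length_eq_dist hG _ hq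
    rw [Walk.length_concat] at this
    omega

lemma btw_comparable (hG : G.IsTree) {r0 x y v : V}
    (hx : Btw G r0 x v) (hy : Btw G r0 y v) : Btw G r0 x y ∨ Btw G r0 y x := by
  have hc := hG.isConnected
  obtain ⟨p1, hp1, hl1⟩ := exists_geodesic hc r0 x
  obtain ⟨p2, hp2, hl2⟩ := exists_geodesic hc x v
  obtain ⟨q1, hq1, hm1⟩ := exists_geodesic hc r0 y
  obtain ⟨q2, hq2, hm2⟩ := exists_geodesic hc y v
  have hWx : (p1.append p2).IsPath := by
    refine isPath_of_length_le hc _ ?_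
    rw [Walk.length_append, hl1, hl2, hx]
  have hWy : (q1.append q2).IsPath := by
    refine isPath_of_length_le hc _ ?_
    rw [Walk.length_append, hm1, hm2, hy]
  have heq : p1.append p2 = q1.append q2 := by
    have := hG.2.path_unique (⟨p1.append p2, hWx⟩ : G.Path r0 v) ⟨q1.append q2, hWy⟩
    exact congrArg Subtype.val this
  have hymem : y ∈ (p1.append p2).support := by
    rw [heq, Walk.mem_support_append_iff]
    right; exact q2.start_mem_support
  have hxsplit : x ∈ ((p1.append p2).takeUntil y hymem).support ∨
      x ∈ ((p1.append p2).dropUntil y hymem).support := by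
    rw [← Walk.mem_support_append_iff, Walk.take_spec]
    rw [Walk.mem_support_append_iff]
    left; exact p1.end_mem_support
  rcases hxsplit with hcase | hcase
  · left
    have := dist_split hG _ (hWx.takeUntil hymem) hcase
    have hty := path_length_eq_dist hG _ (hWx.takeUntil hymem)
    -- takeUntil is a path from r0 to y
    unfold Btw; omega
  · right
    have hsp := dist_split hG _ (hWx.dropUntil hymem) hcase
    have t1 : G.dist r0 v ≤ G.dist r0 x + G.dist x v := hc.dist_triangle
    have t2 : G.dist r0 x ≤ G.dist r0 y + G.dist y x := hc.dist_triangle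
    unfold Btw at hx hy ⊢
    omega

lemma btw_self_right (hc : G.Connected) (a b : V) : Btw G a b b := by
  unfold Btw; simp

lemma btw_self_left (a b : V) : Btw G a a b := by
  unfold Btw; simp

lemma btw_antisymm (hc : G.Connected) {r0 x y : V}
    (h1 : Btw G r0 x y) (h2 : Btw G r0 y x) : x = y := by
  unfold Btw at h1 h2
  rw [show G.dist y x = G.dist x y from SimpleGraph.dist_comm] at h2
  have : G.dist x y = 0 := by omega
  exact (hc.dist_eq_zero_iff).mp this

lemma btw_trans (hc : G.Connected) {r0 x y z : V}
    (h1 : Btw G r0 x y) (h2 : Btw G r0 y z) : Btw G r0 x z := by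
  have t1 : G.dist x z ≤ G.dist x y + G.dist y z := hc.dist_triangle
  have t2 : G.dist r0 z ≤ G.dist r0 x + G.dist x z := hc.dist_triangle
  unfold Btw at *
  omega


section Fin

variable [Fintype V]

/-- number of vertices `u` such that `x` lies between the root and `u`. -/
noncomputable def sz (G : SimpleGraph V) (r0 x : V) : ℕ := {u | Btw G r0 x u}.ncard

/-- logarithmic level. -/
noncomputable def hh (G : SimpleGraph V) (r0 x : V) : ℕ := Nat.log 2 (sz G r0 x)

/-- position within the maximal same-level ancestor run. -/
noncomputable def pp (G : SimpleGraph V) (r0 x : V) : ℕ :=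
  {u | Btw G r0 u x ∧ hh G r0 u = hh G r0 x}.ncard

lemma sz_pos (hc : G.Connected) (r0 x : V) : 1 ≤ sz G r0 x := by
  have : x ∈ {u | Btw G r0 x u} := btw_self_right hc r0 x
  have h := Set.ncard_pos (s := {u | Btw G r0 x u}) (Set.toFinite _)
  exact h.mpr ⟨x, this⟩

lemma sz_le_card (r0 x : V) : sz G r0 x ≤ Fintype.card V := by
  have := Set.ncard_le_ncard (Set.subset_univ {u | Btw G r0 x u}) (Set.toFinite _)
  simpa [Set.ncard_univ, sz] using this

lemma hh_le_log (r0 x : V) : hh G r0 x ≤ Nat.log 2 (Fintype.card V) :=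
  Nat.log_mono_right (sz_le_card r0 x)

lemma pow_hh_le (hc : G.Connected) (r0 x : V) : 2 ^ hh G r0 x ≤ sz G r0 x :=
  Nat.pow_log_le_self 2 (by have := sz_pos hc r0 x; omega)

lemma sz_mono (hc : G.Connected) {r0 x y : V} (h : Btw G r0 x y) : sz G r0 y ≤ sz G r0 x := by
  refine Set.ncard_le_ncard ?_ (Set.toFinite _)
  intro u hu
  exact btw_trans hc h hu

lemma hh_mono (hc : G.Connected) {r0 x y : V} (h : Btw G r0 x y) : hh G r0 y ≤ hh G r0 x :=
  Nat.log_mono_right (sz_mono hc h)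

lemma pp_pos (hc : G.Connected) (r0 x : V) : 1 ≤ pp G r0 x := by
  have : x ∈ {u | Btw G r0 u x ∧ hh G r0 u = hh G r0 x} := ⟨btw_self_right hc r0 x, rfl⟩
  exact (Set.ncard_pos (Set.toFinite _)).mpr ⟨x, this⟩

/-- position increments along a same-level parent/child step. -/
lemma pp_step (hG : G.IsTree) {r0 u v : V} (hadj : G.Adj u v) (hbtw : Btw G r0 u v)
    (hhh : hh G r0 u = hh G r0 v) : pp G r0 v = pp G r0 u + 1 := by
  have hc := hG.isConnected
  have hd1 : G.dist u v = 1 := dist_adj hadj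
  have hset : {w | Btw G r0 w v ∧ hh G r0 w = hh G r0 v}
      = insert v {w | Btw G r0 w u ∧ hh G r0 w = hh G r0 u} := by
    ext w
    simp only [Set.mem_setOf_eq, Set.mem_insert_iff]
    constructor
    · rintro ⟨hw, hhw⟩
      by_cases hwv : w = v
      · left; exact hwv
      · right
        refine ⟨?_, by omega⟩
        rcases btw_comparable hG hw hbtw with hcase | hcase
        · exact hcase
        · -- u between r0 and w; then since w is between r0 and v and dist u v = 1, w = u
          have hdw : G.dist w v ≠ 0 := by
            intro h0
            exact hwv ((hc.dist_eq_zero_iff).mp h0)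
          unfold Btw at hw hcase hbtw ⊢
          have t1 : G.dist u v ≤ G.dist u w + G.dist w v := hc.dist_triangle
          have : G.dist u w = 0 := by omega
          have huw : u = w := (hc.dist_eq_zero_iff).mp this
          subst huw
          simpa using btw_self_right hc r0 u
    · rintro (rfl | ⟨hw, hhw⟩)
      · exact ⟨btw_self_right hc r0 w, rfl⟩
      · exact ⟨btw_trans hc hw hbtw, by omega⟩
  have hnot : v ∉ {w | Btw G r0 w u ∧ hh G r0 w = hh G r0 u} := by
    rintro ⟨hbv, -⟩
    unfold Btw at hbv hbtw
    rw [show G.dist v u = G.dist u v from SimpleGraph.dist_comm] at hbv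
    omega
  unfold pp
  rw [hset, Set.ncard_insert_of_notMem hnot (Set.toFinite _), hhh]

/-- a vertex at position ≥ 2 has the same level as its parent. -/
lemma parent_same_level (hG : G.IsTree) {r0 m x : V} (hpp : 2 ≤ pp G r0 x)
    (hbtw : Btw G r0 m x) (hd : G.dist m x = 1) : hh G r0 m = hh G r0 x := by
  have hc := hG.isConnected
  obtain ⟨w, hw, hwx⟩ := Set.exists_ne_of_one_lt_ncard (by exact hpp) x
  obtain ⟨hbw, hhw⟩ := hw
  have hle : hh G r0 x ≤ hh G r0 m := hh_mono hc hbtw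
  by_cases hwm : w = m
  · subst hwm; omega
  rcases btw_comparable hG hbw hbtw with hcase | hcase
  · -- w between r0 and m : hh m ≤ hh w = hh x
    have := hh_mono hc hcase
    omega
  · -- m strictly between r0 and w, w strictly between r0 and x : dist m x ≥ 2
    exfalso
    have h1 : G.dist m w ≠ 0 := fun h0 => hwm ((hc.dist_eq_zero_iff).mp h0).symm
    have h2 : G.dist w x ≠ 0 := fun h0 => hwx ((hc.dist_eq_zero_iff).mp h0)
    unfold Btw at hbw hbtw hcase
    omega

/-- two distinct same-level children of a common parent are impossible. -/
lemma one_child (hG : G.IsTree) {r0 m x y : V} (hx : Btw G r0 m x) (hy : Btw G r0 m y)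
    (hdx : G.dist m x = 1) (hdy : G.dist m y = 1) (hxy : x ≠ y)
    (hhx : hh G r0 x = hh G r0 m) (hhy : hh G r0 y = hh G r0 m) : False := by
  have hc := hG.isConnected
  have hdisj : Disjoint {u | Btw G r0 x u} {u | Btw G r0 y u} := by
    rw [Set.disjoint_left]
    rintro u hxu hyu
    have hcmp := btw_comparable hG hxu hyu
    unfold Btw at hcmp hx hy
    have hyx : G.dist y x = G.dist x y := SimpleGraph.dist_comm
    refine hxy ((hc.dist_eq_zero_iff).mp ?_)
    rcases hcmp with hcase | hcase
    · omega
    · omega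
  have hsub : {u | Btw G r0 x u} ∪ {u | Btw G r0 y u} ⊆ {u | Btw G r0 m u} := by
    rintro u (hu | hu)
    · exact btw_trans hc hx hu
    · exact btw_trans hc hy hu
  have hcard : sz G r0 x + sz G r0 y ≤ sz G r0 m := by
    have h1 := Set.ncard_union_eq hdisj (Set.toFinite _) (Set.toFinite _)
    have h2 := Set.ncard_le_ncard hsub (Set.toFinite _)
    unfold sz
    omega
  have hx2 := pow_hh_le hc r0 x
  have hy2 := pow_hh_le hc r0 y
  rw [hhx] at hx2
  rw [hhy] at hy2
  have hpow : 2 ^ (hh G r0 m + 1) ≤ sz G r0 m := by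
    rw [pow_succ]
    omega
  have := (Nat.le_log_iff_pow_le (by norm_num) (by have := sz_pos hc r0 m; omega)).mpr hpow
  unfold hh at this
  omega

/-- The chosen set. -/
noncomputable def SS (G : SimpleGraph V) (r0 : V) : Set V := {v | pp G r0 v % 3 = 0}

/-- vertical packing lemma. -/
lemma vertical (hG : G.IsTree) {r0 x y : V} (hx : x ∈ SS G r0) (hy : y ∈ SS G r0)
    (hbtw : Btw G r0 x y) (hxy : x ≠ y) (hd : G.dist x y ≤ 2) : False := by
  have hc := hG.isConnected
  have hdpos : G.dist x y ≠ 0 := fun h0 => hxy ((hc.dist_eq_zero_iff).mp h0)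
  have hhge : hh G r0 y ≤ hh G r0 x := hh_mono hc hbtw
  simp only [SS, Set.mem_setOf_eq] at hx hy
  by_cases hhh : hh G r0 x = hh G r0 y
  · rcases (show G.dist x y = 1 ∨ G.dist x y = 2 by omega) with h1 | h2
    · have hadj : G.Adj x y := dist_eq_one_iff_adj.mp h1
      have := pp_step hG hadj hbtw hhh
      omega
    · -- midpoint
      obtain ⟨p, hp, hl⟩ := exists_geodesic hc x y
      set m := p.getVert 1 with hm
      have hxm : G.Adj x m := by
        have := p.adj_getVert_succ (i := 0) (by omega)
        simpa using this
      have hmy : G.Adj m y := by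
        have := p.adj_getVert_succ (i := 1) (by omega)
        rw [show p.getVert 2 = y by rw [← h2, ← hl]; exact p.getVert_length] at this
        exact this
      rcases adj_depth hG r0 hxm with hdm | hdm
      · -- m is a child of x
        have hbxm : Btw G r0 x m := by
          unfold Btw; rw [dist_adj hxm]; omega
        have hbmy : Btw G r0 m y := by
          unfold Btw at hbtw ⊢
          rw [dist_adj hmy]
          omega
        have e1 : hh G r0 m = hh G r0 x := le_antisymm (hh_mono hc hbxm) (by
          have := hh_mono hc hbmy; omega)
        have s1 := pp_step hG hxm hbxm (by omega)
        have s2 := pp_step hG hmy hbmy (by omega)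
        omega
      · -- m is the parent of x : impossible since y is two below x
        unfold Btw at hbtw
        have t1 : G.dist r0 y ≤ G.dist r0 m + G.dist m y := hc.dist_triangle
        rw [dist_adj hmy] at t1
        omega
  · -- hh x > hh y
    have hppy : 3 ≤ pp G r0 y := by have := pp_pos hc r0 y; omega
    set A := {u | Btw G r0 u y ∧ hh G r0 u = hh G r0 y} with hA
    have hyA : y ∈ A := ⟨btw_self_right hc r0 y, rfl⟩
    have hppy' : 3 ≤ A.ncard := by
      unfold pp at hppy
      rw [hA]
      exact hppy
    have hcard : 2 ≤ (A \ {y}).ncard := by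
      have := Set.ncard_diff_singleton_of_mem hyA
      omega
    obtain ⟨w1, hw1, -⟩ := Set.exists_ne_of_one_lt_ncard (s := A \ {y}) (by omega) y
    obtain ⟨w2, hw2, hw21⟩ := Set.exists_ne_of_one_lt_ncard (show 1 < (A \ {y}).ncard by omega) w1
    rw [Set.mem_diff, Set.mem_singleton_iff] at hw1 hw2
    obtain ⟨⟨hbw1, hhw1⟩, hw1y⟩ := hw1
    obtain ⟨⟨hbw2, hhw2⟩, hw2y⟩ := hw2
    -- both wi are strictly between x and y
    have key : ∀ w : V, Btw G r0 w y → hh G r0 w = hh G r0 y → Btw G r0 x w ∧ w ≠ x := by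
      intro w hbw hhw
      have hwx : w ≠ x := fun h => by rw [h] at hhw; omega
      rcases btw_comparable hG hbw hbtw with hcase | hcase
      · have := hh_mono hc hcase
        omega
      · exact ⟨hcase, hwx⟩
    obtain ⟨hb1, hne1⟩ := key w1 hbw1 hhw1
    obtain ⟨hb2, hne2⟩ := key w2 hbw2 hhw2
    have main : ∀ a b : V, Btw G r0 x a → Btw G r0 a b → Btw G r0 b y → a ≠ x → b ≠ a → y ≠ b →
        False := by
      intro a b h1 h2 h3 n1 n2 n3
      have d1 : G.dist x a ≠ 0 := fun h0 => n1 ((hc.dist_eq_zero_iff).mp h0).symm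
      have d2 : G.dist a b ≠ 0 := fun h0 => n2 ((hc.dist_eq_zero_iff).mp h0).symm
      have d3 : G.dist b y ≠ 0 := fun h0 => n3 ((hc.dist_eq_zero_iff).mp h0).symm
      unfold Btw at h1 h2 h3 hbtw
      omega
    rcases btw_comparable hG hbw1 hbw2 with hcase | hcase
    · exact main w1 w2 hb1 hcase hbw2 hne1 hw21 (Ne.symm hw2y)
    · exact main w2 w1 hb2 hcase hbw1 hne2 (Ne.symm hw21) (Ne.symm hw1y)

/-- horizontal packing lemma. -/
lemma horizontal (hG : G.IsTree) {r0 x y : V} (hx : x ∈ SS G r0) (hy : y ∈ SS G r0)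
    (hxy : x ≠ y) (hdepth : G.dist r0 x = G.dist r0 y) (hd : G.dist x y = 2) : False := by
  have hc := hG.isConnected
  obtain ⟨p, hp, hl⟩ := exists_geodesic hc x y
  set m := p.getVert 1 with hm
  have hxm : G.Adj x m := by
    have := p.adj_getVert_succ (i := 0) (by omega)
    simpa using this
  have hmy : G.Adj m y := by
    have := p.adj_getVert_succ (i := 1) (by omega)
    rw [show p.getVert 2 = y by rw [← hd, ← hl]; exact p.getVert_length] at this
    exact this
  rcases adj_depth hG r0 hxm with hdm | hdm
  · -- m deeper: x and y both parents of m, comparable, same depth, contradiction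
    have hbxm : Btw G r0 x m := by unfold Btw; rw [dist_adj hxm]; omega
    have hbym : Btw G r0 y m := by
      unfold Btw
      rw [dist_adj hmy.symm]
      rcases adj_depth hG r0 hmy.symm with h | h <;> omega
    rcases btw_comparable hG hbxm hbym with hcase | hcase <;>
    · unfold Btw at hcase
      refine hxy ?_
      apply (hc.dist_eq_zero_iff).mp
      first
        | omega
        | (rw [show G.dist x y = G.dist y x from SimpleGraph.dist_comm]; omega)
  · -- m is the common parent
    have hbmx : Btw G r0 m x := by unfold Btw; rw [show G.dist m x = 1 from dist_adj hxm.symm]; omega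
    have hbmy : Btw G r0 m y := by
      unfold Btw
      rw [show G.dist m y = 1 from dist_adj hmy]
      rcases adj_depth hG r0 hmy with h | h <;> omega
    simp only [SS, Set.mem_setOf_eq] at hx hy
    have hhx := parent_same_level hG (by have := pp_pos hc r0 x; omega) hbmx (dist_adj hxm.symm)
    have hhy := parent_same_level hG (by have := pp_pos hc r0 y; omega) hbmy (dist_adj hmy)
    exact one_child hG hbmx hbmy (dist_adj hxm.symm) (dist_adj hmy) hxy (by omega) (by omega)

end Fin

lemma getVert_ne : ∀ {a b : V} (p : G.Walk a b), p.IsPath →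
    ∀ i j, i < j → j ≤ p.length → p.getVert i ≠ p.getVert j := by
  intro a b p
  induction p with
  | nil => intro _ i j hij hj; simp only [Walk.length_nil] at hj; omega
  | @cons u x w hadj q ih =>
    intro hp i j hij hj heq
    rw [Walk.cons_isPath_iff] at hp
    rcases i with _ | i
    · rcases j with _ | j
      · omega
      · simp only [Walk.getVert_zero, Walk.getVert_cons_succ] at heq
        apply hp.2
        refine Walk.mem_support_iff_exists_getVert.mpr ⟨j, heq.symm, ?_⟩
        simp only [Walk.length_cons] at hj
        omega
    · rcases j with _ | j
      · omega
      · simp only [Walk.getVert_cons_succ] at heq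
        simp only [Walk.length_cons] at hj
        exact ih hp.1 i j (by omega) (by omega) heq

lemma dist_getVert_le (hc : G.Connected) {a b : V} (Q : G.Walk a b) :
    ∀ d i, i + d ≤ Q.length → G.dist (Q.getVert i) (Q.getVert (i + d)) ≤ d := by
  intro d
  induction d with
  | zero => intro i _; simp
  | succ d ih =>
    intro i hi
    rw [show i + (d+1) = i + d + 1 by omega]
    have t1 := hc.dist_triangle (u := Q.getVert i) (v := Q.getVert (i+d)) (w := Q.getVert (i+d+1))
    have hadj := Q.adj_getVert_succ (i := i + d) (by omega)
    have := dist_adj hadj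
    have := ih i (by omega)
    omega

/-- the meet: a vertex on the path between `t` and `v` that is an ancestor of both. -/
lemma exists_meet (hG : G.IsTree) (r0 : V) {t v : V} (P : G.Walk t v) (hP : P.IsPath) :
    ∃ m, ∃ hm : m ∈ P.support, Btw G r0 m t ∧ Btw G r0 m v := by
  have hc := hG.isConnected
  obtain ⟨jm, hjmr, hjm⟩ := Finset.exists_min_image (Finset.range (P.length + 1))
      (fun j => G.dist r0 (P.getVert j)) ⟨0, by simp⟩
  rw [Finset.mem_range] at hjmr
  have hmin : ∀ j, j ≤ P.length →
      G.dist r0 (P.getVert jm) ≤ G.dist r0 (P.getVert j) := by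
    intro j hj; exact hjm j (Finset.mem_range.mpr (by omega))
  have hstep : ∀ j, j < P.length →
      G.dist r0 (P.getVert (j+1)) = G.dist r0 (P.getVert j) + 1 ∨
      G.dist r0 (P.getVert j) = G.dist r0 (P.getVert (j+1)) + 1 :=
    fun j hj => adj_depth hG r0 (P.adj_getVert_succ hj)
  have hne := getVert_ne P hP
  have nopeak : ∀ i, i + 2 ≤ P.length →
      G.dist r0 (P.getVert (i+1)) = G.dist r0 (P.getVert i) + 1 →
      G.dist r0 (P.getVert (i+1)) = G.dist r0 (P.getVert (i+2)) + 1 → False := by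
    intro i hi h1 h2
    have ha : G.Adj (P.getVert i) (P.getVert (i+1)) := P.adj_getVert_succ (by omega)
    have hb : G.Adj (P.getVert (i+1)) (P.getVert (i+2)) := by
      have := P.adj_getVert_succ (i := i+1) (by omega)
      rw [show i + 1 + 1 = i + 2 by omega] at this
      exact this
    have hbtw1 : Btw G r0 (P.getVert i) (P.getVert (i+1)) := by
      unfold Btw; rw [dist_adj ha]; omega
    have hbtw2 : Btw G r0 (P.getVert (i+2)) (P.getVert (i+1)) := by
      unfold Btw; rw [dist_adj hb.symm]; omega
    have hne2 := hne i (i+2) (by omega) hi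
    rcases btw_comparable hG hbtw1 hbtw2 with hcase | hcase <;> unfold Btw at hcase
    · exact hne2 ((hc.dist_eq_zero_iff).mp (by omega))
    · refine hne2 ?_
      have h0 : G.dist (P.getVert (i+2)) (P.getVert i) = 0 := by omega
      exact ((hc.dist_eq_zero_iff).mp h0).symm
  have up : ∀ k, jm + k ≤ P.length →
      G.dist r0 (P.getVert (jm + k)) = G.dist r0 (P.getVert jm) + k := by
    intro k
    induction k using Nat.strong_induction_on with
    | _ k IH =>
      rcases k with _ | k
      · intro _; simp
      rcases k with _ | k
      · intro hk
        rw [show jm + (0+1) = jm + 1 by omega]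
        rcases hstep jm (by omega) with h | h
        · omega
        · exfalso; have := hmin (jm+1) (by omega); omega
      · intro hk
        have A := IH (k+1) (by omega) (by omega)
        have B := IH k (by omega) (by omega)
        rw [show jm + (k+1) = jm + k + 1 by omega] at A
        rcases hstep (jm + k + 1) (by omega) with h | h
        · rw [show jm + (k+1+1) = jm + k + 1 + 1 by omega]
          omega
        · exfalso
          refine nopeak (jm + k) (by omega) (by omega) ?_
          rw [show jm + k + 2 = jm + k + 1 + 1 by omega]
          omega
  have down : ∀ k, k ≤ jm →
      G.dist r0 (P.getVert (jm - k)) = G.dist r0 (P.getVert jm) + k := by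
    intro k
    induction k using Nat.strong_induction_on with
    | _ k IH =>
      rcases k with _ | k
      · intro _; simp
      rcases k with _ | k
      · intro hk
        rw [show jm - (0+1) = jm - 1 by omega]
        rcases hstep (jm - 1) (by omega) with h | h <;>
          rw [show jm - 1 + 1 = jm by omega] at h
        · exfalso; have := hmin (jm - 1) (by omega); omega
        · omega
      · intro hk
        have A := IH (k+1) (by omega) (by omega)
        have B := IH k (by omega) (by omega)
        rcases hstep (jm - (k+2)) (by omega) with h | h <;>
          rw [show jm - (k+2) + 1 = jm - (k+1) by omega] at h
        · exfalso
          refine nopeak (jm - (k+2)) (by omega) ?_ ?_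
          · rw [show jm - (k+2) + 1 = jm - (k+1) by omega]
            omega
          · rw [show jm - (k+2) + 1 = jm - (k+1) by omega,
              show jm - (k+2) + 2 = jm - k by omega]
            omega
        · rw [show jm - (k+1+1) = jm - (k+2) by omega]
          omega
  refine ⟨P.getVert jm, Walk.mem_support_iff_exists_getVert.mpr ⟨jm, rfl, by omega⟩, ?_, ?_⟩
  · -- Btw r0 m t
    have h1 := down jm (le_refl jm)
    rw [show jm - jm = 0 by omega, P.getVert_zero] at h1
    have h2 := dist_getVert_le hc P jm 0 (by omega)
    rw [show (0:ℕ) + jm = jm by omega, P.getVert_zero] at h2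
    have t1 := hc.dist_triangle (u := r0) (v := P.getVert jm) (w := t)
    have hcomm : G.dist t (P.getVert jm) = G.dist (P.getVert jm) t := SimpleGraph.dist_comm
    unfold Btw
    omega
  · -- Btw r0 m v
    have h1 := up (P.length - jm) (by omega)
    rw [show jm + (P.length - jm) = P.length by omega, P.getVert_length] at h1
    have h2 := dist_getVert_le hc P (P.length - jm) jm (by omega)
    rw [show jm + (P.length - jm) = P.length by omega, P.getVert_length] at h2
    have t1 := hc.dist_triangle (u := r0) (v := P.getVert jm) (w := v)
    unfold Btw
    omega

section Fin2

variable [Fintype V]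

lemma chain_bound (hG : G.IsTree) (r0 : V) {a b : V} (Q : G.Walk a b) (hQ : Q.IsPath)
    (hab : Btw G r0 a b) (hS : ∀ x ∈ Q.support, x ∉ SS G r0) :
    Q.length ≤ 2 * Nat.log 2 (Fintype.card V) + 1 := by
  have hc := hG.isConnected
  have hQd : Q.length = G.dist a b := path_length_eq_dist hG Q hQ
  have hstep : ∀ j, j ≤ Q.length → G.dist r0 (Q.getVert j) = G.dist r0 a + j := by
    intro j hj
    have h1 : G.dist a (Q.getVert j) ≤ j := by
      have := dist_getVert_le hc Q j 0 (by omega)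
      rw [show (0:ℕ) + j = j by omega, Q.getVert_zero] at this
      exact this
    have t1 := hc.dist_triangle (u := r0) (v := a) (w := Q.getVert j)
    have h2 : G.dist (Q.getVert j) b ≤ Q.length - j := by
      have := dist_getVert_le hc Q (Q.length - j) j (by omega)
      rw [show j + (Q.length - j) = Q.length by omega, Q.getVert_length] at this
      exact this
    have t2 := hc.dist_triangle (u := r0) (v := Q.getVert j) (w := b)
    unfold Btw at hab
    omega
  have hbtwij : ∀ i j, i ≤ j → j ≤ Q.length → Btw G r0 (Q.getVert i) (Q.getVert j) := by
    intro i j hij hj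
    have h1 := hstep i (by omega)
    have h2 := hstep j hj
    have h3 := dist_getVert_le hc Q (j - i) i (by omega)
    rw [show i + (j - i) = j by omega] at h3
    have t := hc.dist_triangle (u := r0) (v := Q.getVert i) (w := Q.getVert j)
    unfold Btw
    omega
  have hmem : ∀ j, j ≤ Q.length → Q.getVert j ∈ Q.support := fun j hj =>
    Walk.mem_support_iff_exists_getVert.mpr ⟨j, rfl, hj⟩
  have hmono : ∀ i j, i ≤ j → j ≤ Q.length →
      hh G r0 (Q.getVert j) ≤ hh G r0 (Q.getVert i) :=
    fun i j hij hj => hh_mono hc (hbtwij i j hij hj)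
  have hppmod : ∀ j, j ≤ Q.length → pp G r0 (Q.getVert j) % 3 ≠ 0 := by
    intro j hj h0
    exact hS _ (hmem j hj) h0
  have hppstep : ∀ d i, i + d ≤ Q.length →
      hh G r0 (Q.getVert (i + d)) = hh G r0 (Q.getVert i) →
      pp G r0 (Q.getVert (i + d)) = pp G r0 (Q.getVert i) + d := by
    intro d
    induction d with
    | zero => intro i _ _; simp
    | succ d ih =>
      intro i hi hhh
      rw [show i + (d+1) = i + d + 1 by omega] at hhh ⊢
      have e1 : hh G r0 (Q.getVert (i + d)) = hh G r0 (Q.getVert i) := by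
        have l1 := hmono i (i+d) (by omega) (by omega)
        have l2 := hmono (i+d) (i+d+1) (by omega) (by omega)
        omega
      have hIH := ih i (by omega) e1
      have hadj := Q.adj_getVert_succ (i := i + d) (by omega)
      have hb := hbtwij (i+d) (i+d+1) (by omega) (by omega)
      have := pp_step hG hadj hb (by omega)
      omega
  have key : ∀ i j, i ≤ j → j ≤ Q.length →
      hh G r0 (Q.getVert i) = hh G r0 (Q.getVert j) →
      pp G r0 (Q.getVert i) % 3 = pp G r0 (Q.getVert j) % 3 → i = j := by
    intro i j hij hj hhh hppe
    by_contra hne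
    have h1 : pp G r0 (Q.getVert j) = pp G r0 (Q.getVert i) + (j - i) := by
      have := hppstep (j - i) i (by omega) (by
        rw [show i + (j - i) = j by omega]; exact hhh.symm)
      rw [show i + (j - i) = j by omega] at this
      exact this
    have hppi := hppmod i (by omega)
    have hji3 : 3 ≤ j - i := by omega
    set e := 3 - pp G r0 (Q.getVert i) % 3 with he
    have hie : i + e ≤ Q.length := by omega
    have hhe : hh G r0 (Q.getVert (i + e)) = hh G r0 (Q.getVert i) := by
      have l1 := hmono i (i+e) (by omega) hie
      have l2 := hmono (i+e) j (by omega) hj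
      omega
    have h4 := hppstep e i hie hhe
    have h5 := hppmod (i+e) hie
    omega
  have hcount : Q.length + 1 ≤ (Nat.log 2 (Fintype.card V) + 1) * 2 := by
    have hmaps : ∀ j ∈ Finset.range (Q.length + 1),
        (fun j => (hh G r0 (Q.getVert j), pp G r0 (Q.getVert j) % 3)) j ∈
          (Finset.range (Nat.log 2 (Fintype.card V) + 1)) ×ˢ ({1, 2} : Finset ℕ) := by
      intro j hj
      rw [Finset.mem_range] at hj
      show (hh G r0 (Q.getVert j), pp G r0 (Q.getVert j) % 3) ∈ _
      rw [Finset.mem_product, Finset.mem_range]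
      refine ⟨by have := hh_le_log (G := G) r0 (Q.getVert j); omega, ?_⟩
      have h1 := hppmod j (by omega)
      have h2 : pp G r0 (Q.getVert j) % 3 < 3 := Nat.mod_lt _ (by norm_num)
      simp only [Finset.mem_insert, Finset.mem_singleton]
      omega
    have hinj : Set.InjOn (fun j => (hh G r0 (Q.getVert j), pp G r0 (Q.getVert j) % 3))
        (Finset.range (Q.length + 1)) := by
      intro i hi j hj hEq
      simp only [Finset.coe_range, Set.mem_Iio] at hi hj
      have e1 := congrArg Prod.fst hEq
      have e2 := congrArg Prod.snd hEq
      simp only at e1 e2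
      rcases le_total i j with h | h
      · exact key i j h (by omega) e1 e2
      · exact (key j i h (by omega) e1.symm e2.symm).symm
    have := Finset.card_le_card_of_injOn _ hmaps hinj
    simpa [Finset.card_product] using this
  omega

end Fin2

lemma lift_walk {S' : Set V} :
    ∀ {a b : V} (p : G.Walk a b), (∀ x ∈ p.support, x ∈ S') → ∀ (ha : a ∈ S') (hb : b ∈ S'),
      ∃ q : (G.induce S').Walk ⟨a, ha⟩ ⟨b, hb⟩, q.length = p.length := by
  intro a b p
  induction p with
  | nil => intro _ ha hb; exact ⟨Walk.nil, rfl⟩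
  | @cons u x w hadj q ih =>
    intro hp ha hb
    have hx : x ∈ S' := hp x (by rw [Walk.support_cons]; exact List.mem_cons_of_mem _ q.start_mem_support)
    obtain ⟨q', hq'⟩ := ih (fun y hy => hp y (by rw [Walk.support_cons]; exact List.mem_cons_of_mem _ hy)) hx hb
    have hadj' : (G.induce S').Adj ⟨u, ha⟩ ⟨x, hx⟩ := by
      simp only [comap_adj, Function.Embedding.coe_subtype]
      exact hadj
    exact ⟨Walk.cons hadj' q', by rw [Walk.length_cons, hq', Walk.length_cons]⟩

section Packing

variable [Fintype V]

lemma packing (hG : G.IsTree) (r0 : V) {x y : V} (hx : x ∈ SS G r0) (hy : y ∈ SS G r0)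
    (hxy : x ≠ y) (hd : G.dist x y ≤ 2) : False := by
  have hc := hG.isConnected
  have hcomm : G.dist y x = G.dist x y := SimpleGraph.dist_comm
  have hdne : G.dist x y ≠ 0 := fun h0 => hxy (hc.dist_eq_zero_iff.mp h0)
  rcases (show G.dist x y = 1 ∨ G.dist x y = 2 by omega) with h1 | h2
  · have hadj : G.Adj x y := dist_eq_one_iff_adj.mp h1
    rcases adj_depth hG r0 hadj with h | h
    · exact vertical hG hx hy (by unfold Btw; omega) hxy (by omega)
    · exact vertical hG hy hx (by unfold Btw; omega) hxy.symm (by omega)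
  · obtain ⟨p, hp, hl⟩ := exists_geodesic hc x y
    set m := p.getVert 1 with hm
    have hxm : G.Adj x m := by
      have := p.adj_getVert_succ (i := 0) (by omega)
      simpa using this
    have hmy : G.Adj m y := by
      have := p.adj_getVert_succ (i := 1) (by omega)
      rw [show p.getVert 2 = y by rw [← h2, ← hl]; exact p.getVert_length] at this
      exact this
    rcases adj_depth hG r0 hxm with h1' | h1' <;> rcases adj_depth hG r0 hmy with h2' | h2'
    · exact vertical hG hx hy (by unfold Btw; omega) hxy (by omega)
    · exact horizontal hG hx hy hxy (by omega) h2
    · exact horizontal hG hx hy hxy (by omega) h2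
    · exact vertical hG hy hx (by unfold Btw; omega) hxy.symm (by omega)

end Packing

end Stmt13Aux

open Stmt13Aux in
/-- Every tree on `n ≥ 2` vertices has an independent set `S` such that no vertex has two
neighbors in `S` and every connected component of the subgraph induced on the complement of `S`
has radius `O(log n)`. -/
theorem stmt_13 :
    ∃ C : ℝ, ∀ (V : Type) [Fintype V] (G : SimpleGraph V), G.IsTree → 2 ≤ Fintype.card V →
      ∃ S : Set V,
        (∀ u ∈ S, ∀ v ∈ S, ¬ G.Adj u v) ∧
        (∀ v : V, ∀ u ∈ S, ∀ w ∈ S, u ≠ w → G.Adj v u → ¬ G.Adj v w) ∧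
        (∀ c : (G.induce Sᶜ).ConnectedComponent, ∃ r ∈ c.supp, ∀ v ∈ c.supp,
          ((G.induce Sᶜ).dist r v : ℝ) ≤ C * Real.logb 2 (Fintype.card V)) := by
  classical
  refine ⟨10, ?_⟩
  intro V _ G hG hn
  have hc := hG.isConnected
  have hV : Nonempty V := Fintype.card_pos_iff.mp (by omega)
  obtain ⟨r0⟩ := hV
  refine ⟨SS G r0, ?_, ?_, ?_⟩
  · intro u hu v hv hadj
    exact packing hG r0 hu hv (G.ne_of_adj hadj) (by rw [dist_adj hadj]; norm_num)
  · intro v u hu w hw huw hadj1 hadj2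
    have t := hc.dist_triangle (u := u) (v := v) (w := w)
    have d1 : G.dist u v = 1 := by
      rw [show G.dist u v = G.dist v u from SimpleGraph.dist_comm]
      exact dist_adj hadj1
    have d2 : G.dist v w = 1 := dist_adj hadj2
    exact packing hG r0 hu hw huw (by omega)
  · intro comp
    obtain ⟨t, ht⟩ := comp.exists_rep
    refine ⟨t, ht, ?_⟩
    intro v hv
    have hreach : (G.induce (SS G r0)ᶜ).Reachable t v :=
      SimpleGraph.ConnectedComponent.exact (ht.trans hv.symm)
    obtain ⟨w0⟩ := hreach
    set wG := w0.map (SimpleGraph.Embedding.induce (G := G) ((SS G r0)ᶜ)).toHom with hwG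
    set P := wG.bypass with hPdef
    have hPp : P.IsPath := wG.bypass_isPath
    have hPsub : ∀ x ∈ P.support, x ∈ ((SS G r0)ᶜ : Set V) := by
      intro x hx
      have hx2 := wG.support_bypass_subset hx
      rw [hwG, Walk.support_map] at hx2
      obtain ⟨y, hy, rfl⟩ := List.mem_map.mp hx2
      exact y.2
    obtain ⟨m, hm, hbt, hbv⟩ := exists_meet hG r0 P hPp
    have hQ1p : ((P.takeUntil m hm).reverse).IsPath := (hPp.takeUntil hm).reverse
    have leg1 : ((P.takeUntil m hm).reverse).length ≤ 2 * Nat.log 2 (Fintype.card V) + 1 := by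
      refine chain_bound hG r0 _ hQ1p hbt ?_
      intro x hx
      rw [Walk.support_reverse, List.mem_reverse] at hx
      exact hPsub x (Walk.support_takeUntil_subset P hm hx)
    have hQ2p : (P.dropUntil m hm).IsPath := hPp.dropUntil hm
    have leg2 : (P.dropUntil m hm).length ≤ 2 * Nat.log 2 (Fintype.card V) + 1 := by
      refine chain_bound hG r0 _ hQ2p hbv ?_
      intro x hx
      exact hPsub x (Walk.support_dropUntil_subset P hm hx)
    have hsplit := congrArg Walk.length (P.take_spec hm)
    rw [Walk.length_append] at hsplit
    rw [Walk.length_reverse] at leg1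
    have hlenP : P.length ≤ 4 * Nat.log 2 (Fintype.card V) + 2 := by omega
    obtain ⟨q, hq⟩ := lift_walk P hPsub t.2 v.2
    have hdist : (G.induce ((SS G r0)ᶜ)).dist t v ≤ P.length := by
      have hle := SimpleGraph.dist_le q
      rw [hq] at hle
      exact hle
    have hL : ((Nat.log 2 (Fintype.card V) : ℕ) : ℝ) ≤ Real.logb 2 (Fintype.card V) :=
      Real.natLog_le_logb _ _
    have h1log : (1 : ℝ) ≤ Real.logb 2 (Fintype.card V) := by
      rw [show (1:ℝ) = Real.logb 2 2 by simp]
      apply Real.logb_le_logb_of_le (by norm_num) (by norm_num)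
      exact_mod_cast hn
    have hfin : (G.induce ((SS G r0)ᶜ)).dist t v ≤ 4 * Nat.log 2 (Fintype.card V) + 2 :=
      le_trans hdist hlenP
    calc ((G.induce ((SS G r0)ᶜ)).dist t v : ℝ)
        ≤ ((4 * Nat.log 2 (Fintype.card V) + 2 : ℕ) : ℝ) := by exact_mod_cast hfin
      _ ≤ 10 * Real.logb 2 (Fintype.card V) := by
          push_cast
          nlinarith [hL, h1log]
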